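/- Suppose A ≥ |B|E and s ≥ Eᵀ|r| entrywise, and define p₀ = 0, p_{k+1} = T(p_k). Then the sequence (p_k) converges (to some limit in ℝⁿ) if and only if T has a nonnegative fixed point; and when it converges, the limit p* satisfies p* = T(p*), p* ≥ 0, and p* ≤ q for every q ≥ 0 with q = T(q), i.e. p* is the least nonnegative fixed point of T. -/

import Mathlib

open Matrix Filter

/-- The Bellman operator `T(p) = s + Aᵀp − Eᵀ|r + Bᵀp|`. -/
noncomputable def Tbell {n m : ℕ} (A : Matrix (Fin n) (Fin n) ℝ) (B : Matrix (Fin n) (Fin m) ℝ)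
    (E : Matrix (Fin m) (Fin n) ℝ) (s : Fin n → ℝ) (r : Fin m → ℝ) (p : Fin n → ℝ) :
    Fin n → ℝ :=
  s + Aᵀ.mulVec p - Eᵀ.mulVec fun i => |(r + Bᵀ.mulVec p) i|

lemma Tbell_mono {n m : ℕ} (A : Matrix (Fin n) (Fin n) ℝ) (B : Matrix (Fin n) (Fin m) ℝ)
    (E : Matrix (Fin m) (Fin n) ℝ) (s : Fin n → ℝ) (r : Fin m → ℝ)
    (hE : ∀ i j, 0 ≤ E i j)
    (hA : ∀ i j, ((Matrix.of fun i j => |B i j|) * E) i j ≤ A i j)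
    {p q : Fin n → ℝ} (hpq : p ≤ q) : Tbell A B E s r p ≤ Tbell A B E s r q := by
  intro i
  simp only [Tbell, Pi.add_apply, Pi.sub_apply, mulVec, dotProduct, transpose_apply]
  have key : ∑ j, E j i * |r j + ∑ k, B k j * q k| - ∑ j, E j i * |r j + ∑ k, B k j * p k|
      ≤ ∑ j, A j i * q j - ∑ j, A j i * p j := by
    have h1 : ∀ j, E j i * |r j + ∑ k, B k j * q k| - E j i * |r j + ∑ k, B k j * p k|
        ≤ ∑ k, E j i * (|B k j| * (q k - p k)) := by
      intro j
      rw [← mul_sub, ← Finset.mul_sum]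
      refine mul_le_mul_of_nonneg_left ?_ (hE j i)
      refine (abs_sub_abs_le_abs_sub _ _).trans ?_
      have h2 : (r j + ∑ k, B k j * q k) - (r j + ∑ k, B k j * p k)
          = ∑ k, B k j * (q k - p k) := by
        simp [mul_sub, Finset.sum_sub_distrib]
      rw [h2]
      refine (Finset.abs_sum_le_sum_abs _ _).trans (Finset.sum_le_sum fun k _ => ?_)
      rw [abs_mul, abs_of_nonneg (sub_nonneg.2 (hpq k))]
    calc ∑ j, E j i * |r j + ∑ k, B k j * q k| - ∑ j, E j i * |r j + ∑ k, B k j * p k|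
        = ∑ j, (E j i * |r j + ∑ k, B k j * q k| - E j i * |r j + ∑ k, B k j * p k|) :=
          (Finset.sum_sub_distrib _ _).symm
      _ ≤ ∑ j, ∑ k, E j i * (|B k j| * (q k - p k)) := Finset.sum_le_sum fun j _ => h1 j
      _ = ∑ k, ∑ j, E j i * (|B k j| * (q k - p k)) := Finset.sum_comm
      _ ≤ ∑ k, A k i * (q k - p k) := by
          refine Finset.sum_le_sum fun k _ => ?_
          have hqp : 0 ≤ q k - p k := sub_nonneg.2 (hpq k)
          calc ∑ j, E j i * (|B k j| * (q k - p k))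
              = (∑ j, |B k j| * E j i) * (q k - p k) := by
                rw [Finset.sum_mul]; congr 1; ext j; ring
            _ ≤ A k i * (q k - p k) := by
                refine mul_le_mul_of_nonneg_right ?_ hqp
                simpa [Matrix.mul_apply] using hA k i
      _ = ∑ j, A j i * q j - ∑ j, A j i * p j := by
          simp [mul_sub, Finset.sum_sub_distrib]
  linarith

lemma cont_mulVec {a b : ℕ} (M : Matrix (Fin a) (Fin b) ℝ) :
    Continuous (fun p : Fin b → ℝ => M.mulVec p) := by
  apply continuous_pi; intro i
  simp only [mulVec, dotProduct]
  exact continuous_finset_sum _ fun j _ => (continuous_const.mul (continuous_apply j))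

lemma Tbell_cont {n m : ℕ} (A : Matrix (Fin n) (Fin n) ℝ) (B : Matrix (Fin n) (Fin m) ℝ)
    (E : Matrix (Fin m) (Fin n) ℝ) (s : Fin n → ℝ) (r : Fin m → ℝ) :
    Continuous (Tbell A B E s r) := by
  unfold Tbell
  refine (continuous_const.add (cont_mulVec Aᵀ)).sub ((cont_mulVec Eᵀ).comp ?_)
  apply continuous_pi; intro i
  exact (continuous_const.add ((continuous_apply i).comp (cont_mulVec Bᵀ))).abs

/-- With `A ≥ |B|E`, `s ≥ Eᵀ|r|`, `p₀ = 0`, `p_{k+1} = T(p_k)`: the sequence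
`(p_k)` converges iff `T` has a nonnegative fixed point; and any limit `p*` is the least
nonnegative fixed point of `T`. -/
theorem value_iteration_convergence {n m : ℕ}
    (A : Matrix (Fin n) (Fin n) ℝ) (B : Matrix (Fin n) (Fin m) ℝ)
    (E : Matrix (Fin m) (Fin n) ℝ) (s : Fin n → ℝ) (r : Fin m → ℝ)
    (hE : ∀ i j, 0 ≤ E i j)
    (hA : ∀ i j, ((Matrix.of fun i j => |B i j|) * E) i j ≤ A i j)
    (hs : Eᵀ.mulVec (fun i => |r i|) ≤ s)
    (P : ℕ → Fin n → ℝ) (hP0 : P 0 = 0)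
    (hPs : ∀ k, P (k + 1) = Tbell A B E s r (P k)) :
    ((∃ pstar : Fin n → ℝ, Tendsto P atTop (nhds pstar)) ↔
      (∃ q : Fin n → ℝ, 0 ≤ q ∧ Tbell A B E s r q = q)) ∧
    (∀ pstar : Fin n → ℝ, Tendsto P atTop (nhds pstar) →
      Tbell A B E s r pstar = pstar ∧ 0 ≤ pstar ∧
        ∀ q : Fin n → ℝ, 0 ≤ q → Tbell A B E s r q = q → pstar ≤ q) := by
  have hmono := fun {p q} h => Tbell_mono A B E s r hE hA (p := p) (q := q) h
  have hT0 : (0 : Fin n → ℝ) ≤ Tbell A B E s r 0 := by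
    intro i
    have : Tbell A B E s r 0 = s - Eᵀ.mulVec (fun i => |r i|) := by
      simp [Tbell, Matrix.mulVec_zero]
    rw [this]
    simpa using sub_nonneg.2 (hs i)
  have hstep : ∀ k, P k ≤ P (k + 1) := by
    intro k; induction k with
    | zero => rw [hPs 0, hP0]; exact hT0
    | succ k ih =>
      calc P (k + 1) = Tbell A B E s r (P k) := hPs k
        _ ≤ Tbell A B E s r (P (k + 1)) := hmono ih
        _ = P (k + 2) := (hPs (k + 1)).symm
  have hMono : Monotone P := monotone_nat_of_le_succ hstep
  have hbound : ∀ q : Fin n → ℝ, 0 ≤ q → Tbell A B E s r q = q → ∀ k, P k ≤ q := by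
    intro q hq hfix k
    induction k with
    | zero => rw [hP0]; exact hq
    | succ k ih => rw [hPs]; exact (hmono ih).trans_eq hfix
  have hlimit : ∀ pstar : Fin n → ℝ, Tendsto P atTop (nhds pstar) →
      Tbell A B E s r pstar = pstar ∧ 0 ≤ pstar ∧
        ∀ q : Fin n → ℝ, 0 ≤ q → Tbell A B E s r q = q → pstar ≤ q := by
    intro pstar hps
    have hfix : Tbell A B E s r pstar = pstar := by
      have h1 : Tendsto (fun k => Tbell A B E s r (P k)) atTop (nhds (Tbell A B E s r pstar)) :=
        ((Tbell_cont A B E s r).continuousAt.tendsto.comp hps)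
      have h2 : Tendsto (fun k => P (k + 1)) atTop (nhds pstar) :=
        hps.comp (tendsto_add_atTop_nat 1)
      have h3 : (fun k => P (k + 1)) = fun k => Tbell A B E s r (P k) := funext hPs
      rw [h3] at h2
      exact tendsto_nhds_unique h1 h2
    have hcomp : ∀ i, Tendsto (fun k => P k i) atTop (nhds (pstar i)) := by
      intro i
      exact (continuous_apply i).continuousAt.tendsto.comp hps
    refine ⟨hfix, ?_, ?_⟩
    · intro i
      refine ge_of_tendsto' (hcomp i) fun k => ?_
      have := hMono (Nat.zero_le k) i
      rwa [hP0] at this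
    · intro q hq hqfix i
      exact le_of_tendsto' (hcomp i) fun k => hbound q hq hqfix k i
  refine ⟨⟨?_, ?_⟩, hlimit⟩
  · rintro ⟨pstar, hps⟩
    obtain ⟨hfix, hnn, -⟩ := hlimit pstar hps
    exact ⟨pstar, hnn, hfix⟩
  · rintro ⟨q, hq, hfix⟩
    refine ⟨fun i => ⨆ k, P k i, ?_⟩
    rw [tendsto_pi_nhds]
    intro i
    exact tendsto_atTop_ciSup (fun a b hab => hMono hab i)
      ⟨q i, Set.forall_mem_range.2 fun k => hbound q hq hfix k i⟩
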